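/- arXiv:1502.06131 — 3 statements merged into one kernel-verified Lean document; each statement's English description precedes it below -/
import Mathlib

section
/- If C is a β-avoiding simplicial complex, then its Alexander dual C* is also β-avoiding. -/
open Finset

/-- A (finite) simplicial complex on ground set `V`: a collection of finite subsets of `V`
closed under taking subsets.  (The empty collection, the void complex, is allowed.) -/
structure SComplex (V : Type) where
  faces : Finset (Finset V)
  down_closed : ∀ s ∈ faces, ∀ t ⊆ s, t ∈ faces

/-- An integer matrix, viewed over `ℚ`, has a rank. -/
noncomputable def intRank {m n : Type} [Fintype n] (A : Matrix m n ℤ) : ℕ :=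
  (A.map ((↑·) : ℤ → ℚ)).rank

/-- An integer matrix `A` of rank `d` is unimodular if there is a nonzero `λ` such that
every `d × d` minor of `A` equals `0`, `λ` or `-λ`. -/
def IntUnimodular {m n : Type} [Fintype m] [Fintype n] (A : Matrix m n ℤ) : Prop :=
  ∃ lam : ℤ, lam ≠ 0 ∧ ∀ (r : Fin (intRank A) → m) (c : Fin (intRank A) → n),
    (A.submatrix r c).det = 0 ∨ (A.submatrix r c).det = lam ∨ (A.submatrix r c).det = -lam

/-- A real matrix `A` of rank `d` is unimodular if there is a nonzero `λ` such that
every `d × d` minor of `A` equals `0`, `λ` or `-λ`. -/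
def RealUnimodular {m n : Type} [Fintype m] [Fintype n] (A : Matrix m n ℝ) : Prop :=
  ∃ lam : ℝ, lam ≠ 0 ∧ ∀ (r : Fin A.rank → m) (c : Fin A.rank → n),
    (A.submatrix r c).det = 0 ∨ (A.submatrix r c).det = lam ∨ (A.submatrix r c).det = -lam

namespace SComplex

variable {V W : Type}

/-- The facets of a simplicial complex: its inclusion-maximal faces. -/
def facets [DecidableEq V] (C : SComplex V) : Finset (Finset V) :=
  C.faces.filter fun F => ∀ G ∈ C.faces, F ⊆ G → F = G

/-- The design matrix `A_{C,d}` of the hierarchical model given by the complex `C` and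
the table dimension vector `d`.  Columns are indexed by tuples `i ∈ ∏ v, [d v]`, rows by
pairs `(F, j)` with `F` a facet and `j ∈ ∏_{v ∈ F} [d v]`; the entry is `1` iff the
restriction of `i` to `F` is `j`. -/
def designMatrixD [DecidableEq V] (C : SComplex V) (d : V → ℕ) :
    Matrix ((F : {F // F ∈ C.facets}) × ((v : {v // v ∈ F.1}) → Fin (d v.1)))
      ((v : V) → Fin (d v)) ℤ :=
  fun r i => if ∀ v : {v // v ∈ r.1.1}, i v.1 = r.2 v then 1 else 0

/-- The binary design matrix `A_C = A_{C,2}`. -/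
def designMatrix [DecidableEq V] (C : SComplex V) := designMatrixD C fun _ => 2

/-- A simplicial complex is unimodular if its binary design matrix is unimodular. -/
def IsUnimodular [DecidableEq V] [Fintype V] (C : SComplex V) : Prop :=
  IntUnimodular (designMatrix C)

/-- The Alexander dual `C* = {S : Sᶜ ∉ C}`. -/
def dual [DecidableEq V] [Fintype V] (C : SComplex V) : SComplex V where
  faces := univ.filter fun s => sᶜ ∉ C.faces
  down_closed := by
    intro s hs t ht
    simp only [mem_filter, mem_univ, true_and] at hs ⊢
    intro h
    exact hs (C.down_closed _ h _ (compl_subset_compl.mpr ht))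

/-- The induced subcomplex of `C` on a vertex subset `A`. -/
def induce [DecidableEq V] (C : SComplex V) (A : Finset V) :
    SComplex {v // v ∈ A} where
  faces := univ.filter fun s => s.map (Function.Embedding.subtype fun v => v ∈ A) ∈ C.faces
  down_closed := by
    intro s hs t ht
    simp only [mem_filter, mem_univ, true_and] at hs ⊢
    exact C.down_closed _ hs _ (map_subset_map.mpr ht)

/-- The link of a set `S` in `C`, as a complex on the ground set `Sᶜ`:
`link_S(C) = {F \ S : F ∈ C, S ⊆ F}`. -/
def link [DecidableEq V] [Fintype V] (C : SComplex V) (S : Finset V) :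
    SComplex {v // v ∈ Sᶜ} where
  faces := univ.filter fun s =>
    s.map (Function.Embedding.subtype fun v => v ∈ Sᶜ) ∪ S ∈ C.faces
  down_closed := by
    intro s hs t ht
    simp only [mem_filter, mem_univ, true_and] at hs ⊢
    exact C.down_closed _ hs _ (union_subset_union_left (map_subset_map.mpr ht))

/-- The minor `link_R(C \ S)` of `C`, a complex on the ground set `(R ∪ S)ᶜ`. -/
def minorAt [DecidableEq V] [Fintype V] (C : SComplex V) (R S : Finset V) :
    SComplex {v // v ∈ (R ∪ S)ᶜ} where
  faces := univ.filter fun s =>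
    s.map (Function.Embedding.subtype fun v => v ∈ (R ∪ S)ᶜ) ∪ R ∈ C.faces
  down_closed := by
    intro s hs t ht
    simp only [mem_filter, mem_univ, true_and] at hs ⊢
    exact C.down_closed _ hs _ (union_subset_union_left (map_subset_map.mpr ht))

/-- Isomorphism of simplicial complexes: a bijection of ground sets carrying faces to faces. -/
def Isomorphic [DecidableEq W] (C : SComplex V) (D : SComplex W) : Prop :=
  ∃ e : V ≃ W, ∀ s : Finset V, s ∈ C.faces ↔ s.image (⇑e) ∈ D.faces

/-- `D` is a minor of `C` if `D` is isomorphic to `link_R(C \ S)` for some face `R` of `C`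
and vertex set `S` disjoint from `R`. -/
def IsMinor [DecidableEq V] [Fintype V] [DecidableEq W] (D : SComplex W) (C : SComplex V) :
    Prop :=
  ∃ R S : Finset V, Disjoint R S ∧ R ∈ C.faces ∧ D.Isomorphic (C.minorAt R S)

/-- The simplicial complex generated by a given collection of sets. -/
def gen [DecidableEq V] [Fintype V] (gens : Finset (Finset V)) : SComplex V where
  faces := univ.filter fun s => ∃ g ∈ gens, s ⊆ g
  down_closed := by
    intro s hs t ht
    simp only [mem_filter, mem_univ, true_and] at hs ⊢
    obtain ⟨g, hg, hsg⟩ := hs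
    exact ⟨g, hg, ht.trans hsg⟩

/-- The cone over `C`: one new vertex (the last one) is added to every face. -/
def cone {n : ℕ} (C : SComplex (Fin n)) : SComplex (Fin (n + 1)) where
  faces := univ.filter fun s => (univ.filter fun v : Fin n => v.castSucc ∈ s) ∈ C.faces
  down_closed := by
    intro s hs t ht
    simp only [mem_filter, mem_univ, true_and] at hs ⊢
    refine C.down_closed _ hs _ ?_
    intro v hv
    simp only [mem_filter, mem_univ, true_and] at hv ⊢
    exact ht hv

/-- Adding one ghost vertex (the last one) to `C`. -/
def ghost {n : ℕ} (C : SComplex (Fin n)) : SComplex (Fin (n + 1)) where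
  faces := univ.filter fun s => Fin.last n ∉ s ∧
    (univ.filter fun v : Fin n => v.castSucc ∈ s) ∈ C.faces
  down_closed := by
    intro s hs t ht
    simp only [mem_filter, mem_univ, true_and] at hs ⊢
    refine ⟨fun h => hs.1 (ht h), C.down_closed _ hs.2 _ ?_⟩
    intro v hv
    simp only [mem_filter, mem_univ, true_and] at hv ⊢
    exact ht hv

/-- The iterated cone `cone^p(C)`. -/
def conePow {n : ℕ} : (p : ℕ) → SComplex (Fin n) → SComplex (Fin (n + p))
  | 0, C => C
  | p + 1, C => cone (conePow p C)

/-- Adding `p` ghost vertices `G^p(C)`. -/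
def ghostPow {n : ℕ} : (p : ℕ) → SComplex (Fin n) → SComplex (Fin (n + p))
  | 0, C => C
  | p + 1, C => ghost (ghostPow p C)

/-- The embedding `Fin n ↪ Fin (n+1)` by `castSucc`. -/
def castSuccEmb' {n : ℕ} : Fin n ↪ Fin (n + 1) :=
  ⟨Fin.castSucc, Fin.castSucc_injective n⟩

/-- The Lawrence lifting `Λ(C)`: its facets are the old ground set `[n]` (a big facet)
together with `F ∪ {n+1}` for each facet `F` of `C`. -/
def lawrence {n : ℕ} (C : SComplex (Fin n)) : SComplex (Fin (n + 1)) :=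
  gen (insert ((univ : Finset (Fin n)).map castSuccEmb')
    (C.facets.image fun F => insert (Fin.last n) (F.map castSuccEmb')))

/-- The disjoint union `Δ_m ⊔ Δ_k` of an `m`-simplex (on the first `m+1` vertices) and
a `k`-simplex (on the remaining `k+1` vertices). -/
def disjSimplices (m k : ℕ) : SComplex (Fin (m + k + 2)) :=
  gen {univ.filter fun x : Fin (m + k + 2) => (x : ℕ) ≤ m,
    univ.filter fun x : Fin (m + k + 2) => m < (x : ℕ)}

/-- The full simplex on `k` vertices (i.e. `Δ_{k-1}`; for `k = 0` this is `Δ_{-1} = {∅}`). -/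
def fullSimplexC (k : ℕ) : SComplex (Fin k) where
  faces := univ
  down_closed := fun _ _ t _ => mem_univ t

/-- The void complex `Δ_{-2} = {}`. -/
def voidC : SComplex (Fin 0) where
  faces := ∅
  down_closed := by simp

/-- `∂Δ_k ⊔ {v}`: the boundary of a `k`-simplex together with one extra disjoint vertex. -/
def bdyDisjPt (k : ℕ) : SComplex (Fin (k + 2)) where
  faces := univ.filter fun s =>
    s ⊂ (univ.filter fun x : Fin (k + 2) => (x : ℕ) < k + 1) ∨ s = {Fin.last (k + 1)}
  down_closed := by
    intro s hs t ht
    simp only [mem_filter, mem_univ, true_and] at hs ⊢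
    rcases hs with hs | rfl
    · exact Or.inl (lt_of_le_of_lt ht hs)
    · rcases Finset.subset_singleton_iff.mp ht with rfl | rfl
      · refine Or.inl (Finset.empty_ssubset.mpr ⟨⟨0, by omega⟩, ?_⟩)
        simp
      · exact Or.inr rfl

/-- The path `P_4` on four vertices. -/
def P4 : SComplex (Fin 4) := gen {{0, 1}, {1, 2}, {2, 3}}

/-- The four-cycle `C_4`. -/
def C4 : SComplex (Fin 4) := gen {{0, 1}, {1, 2}, {2, 3}, {0, 3}}

/-- The boundary of the octahedron, with antipodal vertex pairs `(0,3)`, `(1,4)`, `(2,5)`. -/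
def O6 : SComplex (Fin 6) :=
  gen {{0, 1, 2}, {0, 1, 5}, {0, 4, 2}, {0, 4, 5}, {3, 1, 2}, {3, 1, 5}, {3, 4, 2}, {3, 4, 5}}

/-- The complex `J_1` on five vertices with facets `12, 15, 234, 345`. -/
def J1 : SComplex (Fin 5) := gen {{0, 1}, {0, 4}, {1, 2, 3}, {2, 3, 4}}

/-- The complex `J_2` on five vertices with facets `12, 235, 34, 145`. -/
def J2 : SComplex (Fin 5) := gen {{0, 1}, {1, 2, 4}, {2, 3}, {0, 3, 4}}

/-- The nuclear complexes (on `Fin` ground sets), built from disjoint unions of two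
simplices, duals thereof, and simplices, by repeatedly coning, adding ghost vertices
and taking Lawrence liftings. -/
inductive Nuclear : {n : ℕ} → SComplex (Fin n) → Prop
  | lawrence {n : ℕ} {D : SComplex (Fin n)} : Nuclear D → Nuclear D.lawrence
  | ghost {n : ℕ} {D : SComplex (Fin n)} : Nuclear D → Nuclear D.ghost
  | coneDisj (p m k : ℕ) : Nuclear (conePow p (disjSimplices m k))
  | coneDualDisj (p m k : ℕ) : Nuclear (conePow p (dual (disjSimplices (m + 1) (k + 1))))
  | simplex (k : ℕ) : Nuclear (fullSimplexC k)
  | void : Nuclear voidC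

/-- A complex on an arbitrary ground set is nuclear if it is isomorphic to a nuclear
complex on a `Fin` ground set. -/
def IsNuclear (C : SComplex V) : Prop :=
  ∃ (k : ℕ) (D : SComplex (Fin k)), Nuclear D ∧ C.Isomorphic D

/-- `C` is β-avoiding if no minor of `C` is isomorphic to `P_4`, `O_6`, `O_6*`, `J_1`,
`J_1*`, `J_2`, or `∂Δ_k ⊔ {v}` for some `k ≥ 1`. -/
def BetaAvoiding [DecidableEq V] [Fintype V] (C : SComplex V) : Prop :=
  ¬ IsMinor P4 C ∧ ¬ IsMinor O6 C ∧ ¬ IsMinor (dual O6) C ∧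
  ¬ IsMinor J1 C ∧ ¬ IsMinor (dual J1) C ∧ ¬ IsMinor J2 C ∧
  ∀ k : ℕ, 1 ≤ k → ¬ IsMinor (bdyDisjPt k) C

/-- The 1-skeleton of a complex, as a simple graph. -/
def oneSkeleton [DecidableEq V] (C : SComplex V) : SimpleGraph V where
  Adj u v := u ≠ v ∧ ({u, v} : Finset V) ∈ C.faces
  symm := by
    constructor
    intro u v h
    exact ⟨h.1.symm, by rw [Finset.pair_comm]; exact h.2⟩
  loopless := by
    constructor
    intro u h
    exact h.1 rfl

/-- The non-ghost vertices of `C`: those `v` with `{v}` a face. -/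
def nonGhost [DecidableEq V] [Fintype V] (C : SComplex V) : Finset V :=
  univ.filter fun v => ({v} : Finset V) ∈ C.faces

/-- `S` is a minimal nonface of `C`: not a face, but all proper subsets are faces. -/
def MinNonface (C : SComplex V) (S : Finset V) : Prop :=
  S ∉ C.faces ∧ ∀ t ⊂ S, t ∈ C.faces

/-! ### Auxiliary lemmas for `betaAvoiding_dual` -/

section AuxBeta

variable {V W X : Type}

lemma sc_ext {C D : SComplex V} (h : C.faces = D.faces) : C = D := by
  cases C; cases D; cases h; rfl

lemma dual_dual [DecidableEq V] [Fintype V] (C : SComplex V) : C.dual.dual = C := by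
  apply sc_ext
  ext s
  simp [SComplex.dual, compl_compl]

lemma iso_trans [DecidableEq W] [DecidableEq X] {C : SComplex V} {D : SComplex W}
    {E : SComplex X} (h1 : C.Isomorphic D) (h2 : D.Isomorphic E) : C.Isomorphic E := by
  obtain ⟨e1, he1⟩ := h1
  obtain ⟨e2, he2⟩ := h2
  refine ⟨e1.trans e2, fun s => ?_⟩
  rw [he1 s, he2 (s.image e1), Finset.image_image]
  rfl

lemma image_equiv_compl [DecidableEq V] [Fintype V] [DecidableEq W] [Fintype W]
    (e : V ≃ W) (s : Finset V) : (s.image e)ᶜ = sᶜ.image e := by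
  ext w
  constructor
  · intro hw
    rw [mem_compl] at hw
    refine mem_image.mpr ⟨e.symm w, ?_, e.apply_symm_apply w⟩
    rw [mem_compl]
    intro hs
    exact hw (mem_image.mpr ⟨_, hs, e.apply_symm_apply w⟩)
  · intro hw
    obtain ⟨v, hv, rfl⟩ := mem_image.mp hw
    rw [mem_compl] at hv ⊢
    intro hmem
    obtain ⟨u, hu, heq⟩ := mem_image.mp hmem
    exact hv (e.injective heq ▸ hu)

lemma dual_congr [DecidableEq V] [Fintype V] [DecidableEq W] [Fintype W]
    {C : SComplex V} {D : SComplex W} (h : C.Isomorphic D) :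
    C.dual.Isomorphic D.dual := by
  obtain ⟨e, he⟩ := h
  refine ⟨e, fun s => ?_⟩
  simp only [SComplex.dual, mem_filter, mem_univ, true_and]
  rw [image_equiv_compl, he sᶜ]

lemma minor_compl_eq [DecidableEq V] [Fintype V] {R S : Finset V} (hdisj : Disjoint R S)
    (s : Finset {v // v ∈ (R ∪ S)ᶜ}) :
    ((s.image (Equiv.subtypeEquivRight (q := fun v => v ∈ (S ∪ R)ᶜ)
        (fun v => by rw [union_comm])))ᶜ).map
      (Function.Embedding.subtype fun v => v ∈ (S ∪ R)ᶜ) ∪ S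
      = (s.map (Function.Embedding.subtype fun v => v ∈ (R ∪ S)ᶜ) ∪ R)ᶜ := by
  ext v
  constructor
  · intro hv
    rcases mem_union.mp hv with hv' | hvS
    · obtain ⟨x, hx, rfl⟩ := mem_map.mp hv'
      rw [mem_compl]
      intro hmem
      rcases mem_union.mp hmem with hm | hm
      · obtain ⟨y, hy, hyx⟩ := mem_map.mp hm
        apply mem_compl.mp hx
        refine mem_image.mpr ⟨y, hy, ?_⟩
        exact Subtype.ext hyx
      · exact mem_compl.mp x.2 (mem_union_right _ hm)
    · rw [mem_compl]
      intro hmem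
      rcases mem_union.mp hmem with hm | hm
      · obtain ⟨y, hy, hyv⟩ := mem_map.mp hm
        apply mem_compl.mp y.2
        have : (y : V) = v := hyv
        rw [this]
        exact mem_union_right _ hvS
      · exact disjoint_left.mp hdisj hm hvS
  · intro hv
    rw [mem_compl] at hv
    have hmap : v ∉ s.map (Function.Embedding.subtype fun v => v ∈ (R ∪ S)ᶜ) :=
      fun h => hv (mem_union_left _ h)
    have hR : v ∉ R := fun h => hv (mem_union_right _ h)
    by_cases hS : v ∈ S
    · exact mem_union_right _ hS
    · have hvc : v ∈ (S ∪ R)ᶜ := by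
        rw [mem_compl, mem_union]
        rintro (h | h)
        exacts [hS h, hR h]
      apply mem_union_left
      refine mem_map.mpr ⟨⟨v, hvc⟩, ?_, rfl⟩
      rw [mem_compl]
      intro hmem
      obtain ⟨y, hy, hey⟩ := mem_image.mp hmem
      apply hmap
      refine mem_map.mpr ⟨y, hy, ?_⟩
      exact congrArg Subtype.val hey

lemma minorAt_dual_iso [DecidableEq V] [Fintype V] (C : SComplex V) (R S : Finset V)
    (hdisj : Disjoint R S) :
    ((C.dual).minorAt R S).Isomorphic ((C.minorAt S R).dual) := by
  refine ⟨Equiv.subtypeEquivRight (q := fun v => v ∈ (S ∪ R)ᶜ)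
    (fun v => by rw [union_comm]), fun s => ?_⟩
  simp only [SComplex.minorAt, SComplex.dual, mem_filter, mem_univ, true_and]
  rw [minor_compl_eq hdisj]

lemma minorAt_dual_full [DecidableEq V] [Fintype V] (C : SComplex V) (R S : Finset V)
    (hdisj : Disjoint R S) (hS : S ∉ C.faces) :
    ∀ s, s ∈ ((C.dual).minorAt R S).faces := by
  intro s
  simp only [SComplex.minorAt, SComplex.dual, mem_filter, mem_univ, true_and]
  intro hmem
  apply hS
  apply C.down_closed _ hmem
  intro v hv
  rw [mem_compl]
  intro hmem'
  rcases mem_union.mp hmem' with hm | hm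
  · obtain ⟨y, hy, hyv⟩ := mem_map.mp hm
    apply mem_compl.mp y.2
    have : (y : V) = v := hyv
    rw [this]
    exact mem_union_right _ hv
  · exact disjoint_left.mp hdisj hm hv

lemma isMinor_dual_transfer [DecidableEq V] [Fintype V] [DecidableEq W] [Fintype W]
    {C : SComplex V} {D : SComplex W} (hD : ∃ t : Finset W, t ∉ D.faces)
    (h : D.IsMinor C.dual) : D.dual.IsMinor C := by
  obtain ⟨R, S, hdisj, hR, hiso⟩ := h
  by_cases hS : S ∈ C.faces
  · refine ⟨S, R, hdisj.symm, hS, ?_⟩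
    have h1 : D.Isomorphic ((C.minorAt S R).dual) :=
      iso_trans hiso (minorAt_dual_iso C R S hdisj)
    have h2 := dual_congr h1
    rwa [dual_dual] at h2
  · exfalso
    obtain ⟨t, ht⟩ := hD
    obtain ⟨e, he⟩ := hiso
    exact ht ((he t).mpr (minorAt_dual_full C R S hdisj hS _))

lemma isMinor_congr [DecidableEq V] [Fintype V] [DecidableEq W] [DecidableEq X]
    {C : SComplex V} {D : SComplex W} {D' : SComplex X} (h : D'.Isomorphic D)
    (hm : D.IsMinor C) : D'.IsMinor C := by
  obtain ⟨R, S, h1, h2, h3⟩ := hm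
  exact ⟨R, S, h1, h2, iso_trans h h3⟩

lemma P4_iso_dual : SComplex.P4.Isomorphic SComplex.P4.dual := by
  refine ⟨⟨![3, 1, 2, 0], ![3, 1, 2, 0], by decide, by decide⟩, by decide⟩

lemma J2_iso_dual : SComplex.J2.Isomorphic SComplex.J2.dual := by
  refine ⟨⟨![0, 1, 3, 2, 4], ![0, 1, 3, 2, 4], by decide, by decide⟩, by decide⟩

lemma bdy_nonface (k : ℕ) : (univ : Finset (Fin (k + 2))) ∉ (SComplex.bdyDisjPt k).faces := by
  simp only [SComplex.bdyDisjPt, mem_filter, mem_univ, true_and, not_or]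
  constructor
  · intro h
    exact h.2 (subset_univ _)
  · intro h
    have h0 : (⟨0, by omega⟩ : Fin (k + 2)) ∈ ({Fin.last (k + 1)} : Finset (Fin (k + 2))) := by
      rw [← h]; exact mem_univ _
    have := Finset.mem_singleton.mp h0
    have := congrArg Fin.val this
    simp [Fin.last] at this

lemma bdy_self_dual (k : ℕ) (hk : 1 ≤ k) :
    (SComplex.bdyDisjPt k).dual = SComplex.bdyDisjPt k := by
  apply sc_ext
  ext s
  simp only [SComplex.dual, SComplex.bdyDisjPt, mem_filter, mem_univ, true_and, not_or]
  set l := Fin.last (k + 1) with hl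
  have hW : (univ.filter fun x : Fin (k + 2) => (x : ℕ) < k + 1) = {l}ᶜ := by
    ext x
    simp only [mem_filter, mem_univ, true_and, mem_compl, mem_singleton]
    constructor
    · intro h he
      rw [he, hl] at h
      simp [Fin.last] at h
    · intro h
      have hx := x.isLt
      by_contra h'
      push_neg at h'
      apply h
      apply Fin.ext
      simp [hl, Fin.last]
      omega
  rw [hW]
  constructor
  · rintro ⟨hc1, hc2⟩
    by_cases hls : l ∈ s
    · right
      by_contra hne
      apply hc1
      rw [compl_ssubset_compl]
      exact ⟨singleton_subset_iff.mpr hls,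
        fun hsub => hne (subset_antisymm hsub (singleton_subset_iff.mpr hls))⟩
    · left
      refine Finset.ssubset_iff_subset_ne.mpr ⟨?_, ?_⟩
      · intro x hx
        rw [mem_compl, mem_singleton]
        rintro rfl
        exact hls hx
      · intro he
        apply hc2
        rw [he, compl_compl]
  · rintro (h | rfl)
    · constructor
      · intro hc
        have hl1 : l ∈ sᶜ := mem_compl.mpr (fun hls => absurd (h.1 hls) (by simp))
        have := hc.1 hl1
        simp at this
      · intro hc
        have hs' : s = {l}ᶜ := by
          rw [← compl_compl s, hc]
        exact (Finset.ssubset_iff_subset_ne.mp h).2 hs'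
    · constructor
      · exact fun hc => ssubset_irrefl _ hc
      · intro hc
        have hcard := congrArg Finset.card hc
        rw [card_compl, card_singleton, Fintype.card_fin] at hcard
        omega

end AuxBeta

end SComplex

/-- If `C` is a β-avoiding simplicial complex, then so is its Alexander dual `C*`. -/
theorem betaAvoiding_dual {V : Type} [DecidableEq V] [Fintype V] (C : SComplex V)
    (hC : SComplex.BetaAvoiding C) : SComplex.BetaAvoiding (SComplex.dual C) := by
  obtain ⟨h1, h2, h3, h4, h5, h6, h7⟩ := hC
  refine ⟨?_, ?_, ?_, ?_, ?_, ?_, ?_⟩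
  · intro h
    exact h1 (SComplex.isMinor_congr SComplex.P4_iso_dual
      (SComplex.isMinor_dual_transfer ⟨univ, by decide⟩ h))
  · intro h
    exact h3 (SComplex.isMinor_dual_transfer ⟨univ, by decide⟩ h)
  · intro h
    have := SComplex.isMinor_dual_transfer ⟨univ, by decide⟩ h
    rw [SComplex.dual_dual] at this
    exact h2 this
  · intro h
    exact h5 (SComplex.isMinor_dual_transfer ⟨univ, by decide⟩ h)
  · intro h
    have := SComplex.isMinor_dual_transfer ⟨univ, by decide⟩ h
    rw [SComplex.dual_dual] at this
    exact h4 this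
  · intro h
    exact h6 (SComplex.isMinor_congr SComplex.J2_iso_dual
      (SComplex.isMinor_dual_transfer ⟨univ, by decide⟩ h))
  · intro k hk h
    have := SComplex.isMinor_dual_transfer ⟨univ, SComplex.bdy_nonface k⟩ h
    rw [SComplex.bdy_self_dual k hk] at this
    exact h7 k hk this
end

section
/- Let H be a finite connected simple graph that contains no three pairwise adjacent vertices (no K_3 subgraph) and no induced path on four vertices (no induced P_4). Then H is a complete bipartite graph: its vertex set can be partitioned into two parts such that two vertices are adjacent if and only if they lie in different parts. -/
open Finset

/-- A finite connected simple graph with no triangle and no induced path on four vertices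
is complete bipartite: there is a set `A` of vertices such that two vertices are adjacent
iff exactly one of them lies in `A`. -/
theorem connected_K3_free_P4_free_is_complete_bipartite {V : Type} [Fintype V]
    (H : SimpleGraph V) (hconn : H.Connected)
    (hK3 : ∀ a b c : V, ¬(H.Adj a b ∧ H.Adj b c ∧ H.Adj a c))
    (hP4 : ¬ ∃ a b c d : V, a ≠ b ∧ a ≠ c ∧ a ≠ d ∧ b ≠ c ∧ b ≠ d ∧ c ≠ d ∧
      H.Adj a b ∧ H.Adj b c ∧ H.Adj c d ∧ ¬ H.Adj a c ∧ ¬ H.Adj a d ∧ ¬ H.Adj b d) :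
    ∃ A : Set V, ∀ u v : V, H.Adj u v ↔ ¬(u ∈ A ↔ v ∈ A) := by
  classical
  obtain ⟨x⟩ := hconn.nonempty
  -- Key lemma: for any v with a walk to x, v = x, or v is a neighbor of x,
  -- or v is adjacent to all neighbors of x.
  have key : ∀ v (p : H.Walk v x),
      v = x ∨ H.Adj x v ∨ (∀ a, H.Adj x a → H.Adj v a) := by
    suffices hkey : ∀ w v (p : H.Walk v w), x = w →
        (v = x ∨ H.Adj x v ∨ (∀ a, H.Adj x a → H.Adj v a)) by
      intro v p; exact hkey x v p rfl
    intro w v p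
    induction p with
    | nil => exact fun he => Or.inl he.symm
    | @cons v y _ h q ih =>
      intro he
      subst he
      have ih := ih rfl
      by_cases hvx : v = x
      · exact Or.inl hvx
      by_cases hxv : H.Adj x v
      · exact Or.inr (Or.inl hxv)
      refine Or.inr (Or.inr fun a ha => ?_)
      rcases ih with rfl | hxy | hall
      · exact absurd h.symm hxv
      · -- y is a neighbor of x
        by_cases hay : a = y
        · exact hay ▸ h
        by_cases hva : H.Adj v a
        · exact hva
        exfalso
        apply hP4
        refine ⟨v, y, x, a, h.ne, hvx, ?_, hxy.ne', fun e => hay e.symm, ha.ne,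
          h, hxy.symm, ha, fun e => hxv e.symm, ?_, fun e => hK3 x y a ⟨hxy, e, ha⟩⟩
        · intro e; exact hxv (e ▸ ha)
        · exact hva
      · -- y is adjacent to all neighbors of x
        by_cases hay : a = y
        · exact hay ▸ h
        by_cases hva : H.Adj v a
        · exact hva
        by_cases hxy : H.Adj x y
        · exfalso
          apply hP4
          refine ⟨v, y, x, a, h.ne, hvx, ?_, hxy.ne', fun e => hay e.symm, ha.ne,
            h, hxy.symm, ha, fun e => hxv e.symm, hva, fun e => hK3 x y a ⟨hxy, e, ha⟩⟩
          intro e; exact hxv (e ▸ ha)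
        · exfalso
          have hya : H.Adj y a := hall a ha
          have hyx : y ≠ x := fun e => hxv (e ▸ h).symm
          apply hP4
          exact ⟨v, y, a, x, h.ne, fun e => hxv (e ▸ ha), hvx, fun e => hay e.symm,
            hyx, ha.ne', h, hya, ha.symm, hva, fun e => hxv e.symm,
            fun e => hxy e.symm⟩
  refine ⟨{v | H.Adj x v}, fun u v => ?_⟩
  simp only [Set.mem_setOf_eq]
  constructor
  · intro huv hiff
    by_cases hu : H.Adj x u
    · exact hK3 x u v ⟨hu, huv, hiff.mp hu⟩
    · have hv : ¬ H.Adj x v := fun hv => hu (hiff.mpr hv)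
      by_cases hux : u = x
      · exact hv (hux ▸ huv)
      by_cases hvx : v = x
      · exact hu (hvx ▸ huv.symm)
      obtain ⟨pu⟩ := hconn.preconnected u x
      obtain ⟨pv⟩ := hconn.preconnected v x
      have hallu : ∀ a, H.Adj x a → H.Adj u a := by
        rcases key u pu with e | e | e
        · exact absurd e hux
        · exact absurd e hu
        · exact e
      have hallv : ∀ a, H.Adj x a → H.Adj v a := by
        rcases key v pv with e | e | e
        · exact absurd e hvx
        · exact absurd e hv
        · exact e
      obtain ⟨a, ha⟩ : ∃ a, H.Adj x a := by
        obtain ⟨p⟩ := hconn.preconnected x u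
        cases p with
        | nil => exact absurd rfl (Ne.symm hux)
        | cons h q => exact ⟨_, h⟩
      exact hK3 u v a ⟨huv, hallv a ha, hallu a ha⟩
  · intro hne
    by_cases hu : H.Adj x u
    · have hv : ¬ H.Adj x v := fun hv => hne (iff_of_true hu hv)
      by_cases hvx : v = x
      · exact hvx ▸ hu.symm
      obtain ⟨pv⟩ := hconn.preconnected v x
      rcases key v pv with e | e | e
      · exact absurd e hvx
      · exact absurd e hv
      · exact (e u hu).symm
    · have hv : H.Adj x v := by
        by_contra hv
        exact hne (iff_of_false hu hv)
      by_cases hux : u = x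
      · exact hux ▸ hv
      obtain ⟨pu⟩ := hconn.preconnected u x
      rcases key u pu with e | e | e
      · exact absurd e hux
      · exact absurd e hu
      · exact e v hv
end

section
/- Let C be a simplicial complex on [n] and let d, d' ∈ ℤ^n satisfy 2 ≤ d'_i ≤ d_i for all i. If the design matrix A_{C,d} is unimodular, then A_{C,d'} is unimodular. -/
open Finset

section DMAux

open SComplex Finset

variable {n : ℕ} (C : SComplex (Fin n))

lemma mem_facets_dmaux {F : Finset (Fin n)} :
    F ∈ C.facets ↔ F ∈ C.faces ∧ ∀ G ∈ C.faces, F ⊆ G → F = G := by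
  simp [SComplex.facets]

/-- Every face is contained in a facet. -/
lemma exists_facet_dmaux {G : Finset (Fin n)} (hG : G ∈ C.faces) :
    ∃ F ∈ C.facets, G ⊆ F := by
  have hne : (C.faces.filter fun H => G ⊆ H).Nonempty :=
    ⟨G, by simp only [Finset.mem_filter]; exact ⟨hG, Finset.Subset.refl G⟩⟩
  obtain ⟨F, hF, hmax0⟩ := Finset.exists_maximal hne
  have hF : F ∈ C.faces.filter fun H => G ⊆ H := hF
  have hmax : ∀ H ∈ (C.faces.filter fun H => G ⊆ H), ¬ F < H :=
    fun H hH hlt => lt_irrefl F (lt_of_lt_of_le hlt (hmax0 hH hlt.le))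
  rw [Finset.mem_filter] at hF
  refine ⟨F, ?_, hF.2⟩
  rw [mem_facets_dmaux]
  refine ⟨hF.1, fun H hH hFH => ?_⟩
  by_contra hne'
  exact hmax H (Finset.mem_filter.mpr ⟨hH, hF.2.trans hFH⟩) (lt_of_le_of_ne hFH hne')

/-- A facet containing a given face. -/
noncomputable def facetOf {G : Finset (Fin n)} (hG : G ∈ C.faces) :
    {F : Finset (Fin n) // F ∈ C.facets ∧ G ⊆ F} :=
  ⟨(exists_facet_dmaux C hG).choose, (exists_facet_dmaux C hG).choose_spec.1,
    (exists_facet_dmaux C hG).choose_spec.2⟩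

/-- Pairs `(G, k)` with `G` a face and `k v ∈ {1, …, d v - 1}` (stored as `Fin (d v - 1)`). -/
abbrev Pairs (d : Fin n → ℕ) :=
  Σ G : {G // G ∈ C.faces}, ((v : {v // v ∈ G.1}) → Fin (d v.1 - 1))

variable {d : Fin n → ℕ}

/-- Underlying value of a pair at a vertex: `k v + 1` on `G`, `0` off `G`. -/
def valOf (p : Pairs C d) (v : Fin n) : ℕ :=
  if h : v ∈ p.1.1 then (p.2 ⟨v, h⟩).1 + 1 else 0

lemma valOf_lt (h2 : ∀ v, 2 ≤ d v) (p : Pairs C d) (v : Fin n) : valOf C p v < d v := by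
  unfold valOf; split
  · rename_i h
    have h3 : ((p.2 ⟨v, h⟩).1 : ℕ) < d v - 1 := (p.2 ⟨v, h⟩).2
    omega
  · have := h2 v; omega

/-- The column associated to a pair. -/
def colOf (h2 : ∀ v, 2 ≤ d v) (p : Pairs C d) : (v : Fin n) → Fin (d v) :=
  fun v => ⟨valOf C p v, valOf_lt C h2 p v⟩

/-- The row associated to a pair. -/
noncomputable def rowOf (h2 : ∀ v, 2 ≤ d v) (p : Pairs C d) :
    (F : {F // F ∈ C.facets}) × ((v : {v // v ∈ F.1}) → Fin (d v.1)) :=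
  ⟨⟨(facetOf C p.1.2).1, (facetOf C p.1.2).2.1⟩,
   fun v => ⟨valOf C p v.1, valOf_lt C h2 p v.1⟩⟩

lemma entry_diag (h2 : ∀ v, 2 ≤ d v) (p : Pairs C d) :
    C.designMatrixD d (rowOf C h2 p) (colOf C h2 p) = 1 := by
  unfold SComplex.designMatrixD
  rw [if_pos]
  intro v
  rfl

lemma entry_ne_zero (h2 : ∀ v, 2 ≤ d v) {p q : Pairs C d}
    (h : C.designMatrixD d (rowOf C h2 p) (colOf C h2 q) ≠ 0) :
    p = q ∨ p.1.1.card < q.1.1.card := by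
  unfold SComplex.designMatrixD at h
  have hc : ∀ v : {v // v ∈ (rowOf C h2 p).1.1}, colOf C h2 q v.1 = (rowOf C h2 p).2 v := by
    by_contra hcc
    rw [if_neg hcc] at h
    exact h rfl
  have hval : ∀ (v : Fin n), v ∈ (facetOf C p.1.2).1 → valOf C q v = valOf C p v := by
    intro v hv
    exact congrArg Fin.val (hc ⟨v, hv⟩)
  have hsub : p.1.1 ⊆ q.1.1 := by
    intro v hv
    have hvF : v ∈ (facetOf C p.1.2).1 := (facetOf C p.1.2).2.2 hv
    have h1 := hval v hvF
    unfold valOf at h1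
    rw [dif_pos hv] at h1
    by_contra hvq
    rw [dif_neg hvq] at h1
    omega
  rcases lt_or_eq_of_le (Finset.card_le_card hsub) with hlt | hcard
  · exact Or.inr hlt
  · left
    have hGeq : p.1.1 = q.1.1 := Finset.eq_of_subset_of_card_le hsub (le_of_eq hcard.symm)
    obtain ⟨⟨Gp, hGp⟩, kp⟩ := p
    obtain ⟨⟨Gq, hGq⟩, kq⟩ := q
    simp only at hGeq
    subst hGeq
    have hk : kp = kq := by
      funext v
      have hvF : v.1 ∈ (facetOf C (show Gp ∈ C.faces from hGp)).1 :=
        (facetOf C hGp).2.2 v.2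
      have h1 := hval v.1 hvF
      unfold valOf at h1
      rw [dif_pos v.2, dif_pos v.2] at h1
      have h2 : ((kq v).1 : ℕ) + 1 = (kp v).1 + 1 := h1
      exact Fin.ext (by omega)
    subst hk
    rfl

/-- Triangular determinant: the square submatrix of the design matrix on any injective
family of pairs has determinant 1. -/
lemma det_pairs (h2 : ∀ v, 2 ≤ d v) {Q : Type} [Fintype Q] [DecidableEq Q] (f : Q → Pairs C d)
    (hf : Function.Injective f) :
    ((C.designMatrixD d).submatrix (rowOf C h2 ∘ f) (colOf C h2 ∘ f)).det = 1 := by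
  classical
  set N := Fintype.card Q with hN
  let e₀ : Fin N ≃ Q := (Fintype.equivFin Q).symm
  let κ : Fin N → ℕ := fun i => (f (e₀ i)).1.1.card
  let σ : Equiv.Perm (Fin N) := Tuple.sort κ
  have hmono : Monotone (κ ∘ σ) := Tuple.monotone_sort κ
  let e : Fin N ≃ Q := σ.trans e₀
  rw [← Matrix.det_submatrix_equiv_self e]
  have htri : (((C.designMatrixD d).submatrix (rowOf C h2 ∘ f) (colOf C h2 ∘ f)).submatrix
      e e).BlockTriangular id := by
    intro i j hij
    by_contra hne
    rcases entry_ne_zero C h2 hne with heq | hlt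
    · exact absurd (e.injective (hf heq)) (ne_of_gt hij)
    · have : κ (σ j) ≤ κ (σ i) := hmono (le_of_lt hij)
      exact absurd hlt (by simpa [κ, e, e₀] using not_lt.mpr this)
  rw [Matrix.det_of_upperTriangular htri]
  exact Finset.prod_eq_one fun i _ => entry_diag C h2 (f (e i))

end DMAux
section DMAux2

open SComplex Finset

attribute [local instance] Classical.propDecidable

variable {n : ℕ} (C : SComplex (Fin n))
variable {d d' : Fin n → ℕ} (hd : ∀ v, 2 ≤ d' v ∧ d' v ≤ d v)

/-- Embedding of pairs for `d'` into pairs for `d`. -/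
def gpEmb (p : Pairs C d') : Pairs C d :=
  ⟨p.1, fun v => ⟨(p.2 v).1, by
    have h1 := (p.2 v).2
    have h2 := (hd v.1).2
    omega⟩⟩

lemma gpEmb_injective : Function.Injective (gpEmb C hd) := by
  rintro ⟨G, k⟩ ⟨G', k'⟩ h
  have h1 : G = G' := congrArg Sigma.fst h
  subst h1
  have hk : k = k' := by
    funext v
    apply Fin.ext
    have hv := congrArg (fun p => valOf C p v.1) h
    have e1 : valOf C (gpEmb C hd ⟨G, k⟩) v.1 = (k v).1 + 1 := dif_pos v.2
    have e2 : valOf C (gpEmb C hd ⟨G, k'⟩) v.1 = (k' v).1 + 1 := dif_pos v.2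
    have hv' : ((k v).1 : ℕ) + 1 = (k' v).1 + 1 := by rw [← e1, ← e2]; exact hv
    omega
  rw [hk]

/-- Embedding of rows for `d'` into rows for `d`. -/
def grEmb (r : (F : {F // F ∈ C.facets}) × ((v : {v // v ∈ F.1}) → Fin (d' v.1))) :
    (F : {F // F ∈ C.facets}) × ((v : {v // v ∈ F.1}) → Fin (d v.1)) :=
  ⟨r.1, fun v => ⟨(r.2 v).1, lt_of_lt_of_le (r.2 v).2 (hd v.1).2⟩⟩

/-- Embedding of columns for `d'` into columns for `d`. -/
def gcEmb (i : (v : Fin n) → Fin (d' v)) : (v : Fin n) → Fin (d v) :=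
  fun v => ⟨(i v).1, lt_of_lt_of_le (i v).2 (hd v).2⟩

lemma entry_emb (r : (F : {F // F ∈ C.facets}) × ((v : {v // v ∈ F.1}) → Fin (d' v.1)))
    (i : (v : Fin n) → Fin (d' v)) :
    C.designMatrixD d (grEmb C hd r) (gcEmb hd i) = C.designMatrixD d' r i := by
  unfold SComplex.designMatrixD
  refine if_congr ?_ rfl rfl
  constructor
  · intro h v
    have := congrArg Fin.val (h v)
    exact Fin.ext this
  · intro h v
    have := congrArg Fin.val (h v)
    exact Fin.ext this

lemma entry_bad_good (h2 : ∀ v, 2 ≤ d v) {p : Pairs C d}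
    (hp : p ∉ Set.range (gpEmb C hd)) (i : (v : Fin n) → Fin (d' v)) :
    C.designMatrixD d (rowOf C h2 p) (gcEmb hd i) = 0 := by
  -- there is a vertex of G where the value is at least d' v
  have hbad : ∃ v : {v // v ∈ p.1.1}, d' v.1 ≤ (p.2 v).1 + 1 := by
    by_contra hall
    push_neg at hall
    refine hp ⟨⟨p.1, fun v => ⟨(p.2 v).1, by have := hall v; omega⟩⟩, ?_⟩
    refine Sigma.mk.inj_iff.mpr ⟨rfl, heq_of_eq ?_⟩
    funext v
    exact Fin.ext rfl
  obtain ⟨v₀, hv₀⟩ := hbad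
  unfold SComplex.designMatrixD
  rw [if_neg]
  intro hall
  have hvF : v₀.1 ∈ (facetOf C p.1.2).1 := (facetOf C p.1.2).2.2 v₀.2
  have := congrArg Fin.val (hall ⟨v₀.1, hvF⟩)
  have hval : valOf C p v₀.1 = (p.2 v₀).1 + 1 := by
    unfold valOf
    rw [dif_pos v₀.2]
  have hlt := (i v₀.1).2
  simp only [gcEmb] at this
  rw [show ((rowOf C h2 p).2 ⟨v₀.1, hvF⟩ : ℕ) = valOf C p v₀.1 from rfl] at this
  omega

lemma card_pairs_split :
    Fintype.card (Pairs C d) =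
      Fintype.card (Pairs C d') +
        Fintype.card {p : Pairs C d // p ∉ Set.range (gpEmb C hd)} := by
  classical
  have h1 : Fintype.card {p : Pairs C d // p ∈ Set.range (gpEmb C hd)} =
      Fintype.card (Pairs C d') := by
    exact Fintype.card_congr ((Equiv.subtypeEquivRight (fun p => Iff.rfl)).trans
      (Equiv.ofInjective _ (gpEmb_injective C hd)).symm)
  have e : Pairs C d ≃ {p // p ∈ Set.range (gpEmb C hd)} ⊕
      {p : Pairs C d // p ∉ Set.range (gpEmb C hd)} :=
    (Equiv.sumCompl fun p : Pairs C d => p ∈ Set.range (gpEmb C hd)).symm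
  rw [Fintype.card_congr e, Fintype.card_sum, h1]

end DMAux2

section RankAux

open Matrix Submodule

attribute [local instance] Classical.propDecidable

/-- If a square submatrix has nonzero determinant, the rank is at least its size. -/
lemma card_le_rank_of_det_ne {m' n' ι : Type} [Fintype m'] [Fintype n'] [Fintype ι]
    [DecidableEq ι] (M : Matrix m' n' ℚ) (r : ι → m') (c : ι → n')
    (hdet : (M.submatrix r c).det ≠ 0) : Fintype.card ι ≤ M.rank := by
  classical
  have hunit : IsUnit (M.submatrix r c) :=
    (Matrix.isUnit_iff_isUnit_det _).mpr (isUnit_iff_ne_zero.mpr hdet)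
  have hli : LinearIndependent ℚ (fun j => (M.submatrix r c)ᵀ j) :=
    Matrix.linearIndependent_cols_iff_isUnit.mpr hunit
  have hli2 : LinearIndependent ℚ (fun j => Mᵀ (c j)) := by
    have heq : (fun j => (M.submatrix r c)ᵀ j) =
        (LinearMap.funLeft ℚ ℚ r) ∘ (fun j => Mᵀ (c j)) := by
      funext j; funext i; rfl
    rw [heq] at hli
    exact hli.of_comp _
  rw [Matrix.rank_eq_finrank_span_cols]
  rw [← finrank_span_eq_card hli2]
  apply Submodule.finrank_mono
  apply Submodule.span_mono
  rintro x ⟨j, rfl⟩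
  exact ⟨c j, rfl⟩

/-- A matrix of rank `r` has an invertible `r × r` submatrix. -/
lemma exists_submatrix_det_ne {m' n' : Type} [Fintype m'] [Fintype n'] (M : Matrix m' n' ℚ) :
    ∃ (r : Fin M.rank → m') (c : Fin M.rank → n'), (M.submatrix r c).det ≠ 0 := by
  classical
  -- choose independent columns spanning the column space
  obtain ⟨b, hbsub, hbspan, hbli⟩ := exists_linearIndependent ℚ (Set.range Mᵀ)
  haveI : Fintype b := ((Set.finite_range Mᵀ).subset hbsub).fintype
  have hbcard : b.toFinset.card = M.rank := by
    rw [Matrix.rank_eq_finrank_span_cols, Matrix.col, ← hbspan, finrank_span_set_eq_card hbli]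
  have hchoice : ∀ x : b, ∃ j, Mᵀ j = (x : m' → ℚ) := fun x => hbsub x.2
  choose c₁ hc₁ using hchoice
  -- the column-restricted matrix
  set M₁ : Matrix m' b ℚ := M.submatrix id c₁ with hM₁
  have hM₁t : ∀ x : b, M₁ᵀ x = (x : m' → ℚ) := fun x => hc₁ x
  have hrank₁ : M₁.rank = M.rank := by
    rw [Matrix.rank_eq_finrank_span_cols]
    have : Set.range M₁ᵀ = b := by
      ext y
      constructor
      · rintro ⟨x, rfl⟩; rw [hM₁t]; exact x.2
      · intro hy; exact ⟨⟨y, hy⟩, hM₁t ⟨y, hy⟩⟩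
    rw [Matrix.col, this, Matrix.rank_eq_finrank_span_cols, Matrix.col, ← hbspan]
  -- choose independent rows of M₁ spanning its row space
  obtain ⟨b₂, hb₂sub, hb₂span, hb₂li⟩ := exists_linearIndependent ℚ (Set.range M₁)
  haveI : Fintype b₂ := ((Set.finite_range M₁).subset hb₂sub).fintype
  have hb₂card : b₂.toFinset.card = M.rank := by
    rw [← hrank₁, Matrix.rank_eq_finrank_span_row, Matrix.row, ← hb₂span, finrank_span_set_eq_card hb₂li]
  have hchoice₂ : ∀ y : b₂, ∃ i, M₁ i = (y : b → ℚ) := fun y => hb₂sub y.2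
  choose r₁ hr₁ using hchoice₂
  -- the square matrix
  have hcardb : Fintype.card b = M.rank := by rwa [Set.toFinset_card] at hbcard
  have hcardb₂ : Fintype.card b₂ = M.rank := by rwa [Set.toFinset_card] at hb₂card
  let eb : Fin M.rank ≃ b := (Fintype.equivFinOfCardEq hcardb).symm
  let eb₂ : Fin M.rank ≃ b₂ := (Fintype.equivFinOfCardEq hcardb₂).symm
  refine ⟨fun i => r₁ (eb₂ i), fun i => c₁ (eb i), ?_⟩
  set Q : Matrix (Fin M.rank) (Fin M.rank) ℚ :=
    M.submatrix (fun i => r₁ (eb₂ i)) (fun i => c₁ (eb i)) with hQ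
  have hrows : ∀ i, Q i = fun j => (eb₂ i : b → ℚ) (eb j) := by
    intro i
    funext j
    have : M₁ (r₁ (eb₂ i)) = ((eb₂ i : b₂) : b → ℚ) := hr₁ (eb₂ i)
    exact congrFun this (eb j)
  have hliQ : LinearIndependent ℚ (fun i => Q i) := by
    have h1 : LinearIndependent ℚ (fun y : b₂ => (y : b → ℚ)) := hb₂li
    have h2 : LinearIndependent ℚ (fun i : Fin M.rank => ((eb₂ i : b₂) : b → ℚ)) :=
      h1.comp eb₂ eb₂.injective
    have h3 := h2.map' (LinearEquiv.funCongrLeft ℚ ℚ eb).toLinearMap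
      (LinearEquiv.ker _)
    have heq : (fun i => Q i) =
        fun i => (LinearEquiv.funCongrLeft ℚ ℚ eb) ((eb₂ i : b₂) : b → ℚ) := by
      funext i
      rw [hrows i]
      rfl
    rwa [heq]
  have hunit : IsUnit Q := Matrix.linearIndependent_rows_iff_isUnit.mp hliQ
  exact ((Matrix.isUnit_iff_isUnit_det Q).mp hunit).ne_zero

end RankAux
section L1

open SComplex Finset Submodule Module

attribute [local instance] Classical.propDecidable

variable {n : ℕ} (C : SComplex (Fin n)) {d : Fin n → ℕ}

/-- Per-coordinate expansion coefficients. -/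
def coefC {k : ℕ} (jv tv : Fin k) : ℚ :=
  if jv.1 = 0 then (if tv.1 = 0 then 1 else -1) else (if tv = jv then 1 else 0)

lemma coef_sum {k : ℕ} (jv : Fin k) (x : ℕ) (hx : x < k) :
    ∑ s : Fin k, coefC jv s * (if s.1 = 0 then 1 else if x = s.1 then (1:ℚ) else 0)
      = if x = jv.1 then 1 else 0 := by
  classical
  by_cases hj : jv.1 = 0
  · have hterm : ∀ s : Fin k,
        coefC jv s * (if s.1 = 0 then 1 else if x = s.1 then (1:ℚ) else 0)
          = (if s.1 = 0 then (1:ℚ) else 0)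
            + (if s = ⟨x, hx⟩ then (if x = 0 then (0:ℚ) else -1) else 0) := by
      intro s
      unfold coefC
      rw [if_pos hj]
      by_cases hs : s.1 = 0
      · rw [if_pos hs, if_pos hs, if_pos hs]
        by_cases hxs : s = ⟨x, hx⟩
        · have hx0 : x = 0 := by rw [hxs] at hs; exact hs
          rw [if_pos hxs, if_pos hx0]; norm_num
        · rw [if_neg hxs]; norm_num
      · rw [if_neg hs, if_neg hs, if_neg hs]
        by_cases hxs : s = ⟨x, hx⟩
        · have hxv : x = s.1 := by rw [hxs]
          have hx0 : ¬ x = 0 := by rw [hxs] at hs; omega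
          rw [if_pos hxv, if_pos hxs, if_neg hx0]; norm_num
        · have hxv : ¬ x = s.1 := fun h => hxs (Fin.ext h.symm)
          rw [if_neg hxv, if_neg hxs]; norm_num
    rw [Finset.sum_congr rfl (fun s _ => hterm s), Finset.sum_add_distrib]
    have e1 : ∑ s : Fin k, (if s.1 = 0 then (1:ℚ) else 0) = 1 := by
      have h0 : (0:ℕ) < k := by omega
      have : ∀ s : Fin k, (if s.1 = 0 then (1:ℚ) else 0)
          = if s = ⟨0, h0⟩ then (1:ℚ) else 0 := by
        intro s
        refine if_congr ?_ rfl rfl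
        exact ⟨fun h => Fin.ext h, fun h => by rw [h]⟩
      rw [Finset.sum_congr rfl (fun s _ => this s), Finset.sum_ite_eq' Finset.univ]
      simp
    have e2 : ∑ s : Fin k, (if s = ⟨x, hx⟩ then (if x = 0 then (0:ℚ) else -1) else 0)
        = if x = 0 then (0:ℚ) else -1 := by
      rw [Finset.sum_ite_eq' Finset.univ]
      simp
    rw [e1, e2, hj]
    by_cases hx0 : x = 0
    · rw [if_pos hx0, if_pos hx0]; norm_num
    · rw [if_neg hx0, if_neg hx0]; norm_num
  · have hterm : ∀ s : Fin k,
        coefC jv s * (if s.1 = 0 then 1 else if x = s.1 then (1:ℚ) else 0)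
          = if s = jv then (if x = jv.1 then (1:ℚ) else 0) else 0 := by
      intro s
      unfold coefC
      rw [if_neg hj]
      by_cases hsj : s = jv
      · rw [if_pos hsj, if_pos hsj, hsj, if_neg hj, one_mul]
      · rw [if_neg hsj, if_neg hsj, zero_mul]
    rw [Finset.sum_congr rfl (fun s _ => hterm s), Finset.sum_ite_eq' Finset.univ]
    simp

lemma prod_boole' {ι : Type} [Fintype ι] (p : ι → Prop) [DecidablePred p]
    [Decidable (∀ v, p v)] :
    (∏ v : ι, if p v then (1:ℚ) else 0) = if (∀ v, p v) then 1 else 0 := by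
  by_cases hall : ∀ v, p v
  · rw [if_pos hall, Finset.prod_congr rfl (fun v _ => if_pos (hall v)), Finset.prod_const_one]
  · rw [if_neg hall]
    push_neg at hall
    obtain ⟨v₀, hv₀⟩ := hall
    exact Finset.prod_eq_zero (Finset.mem_univ v₀) (if_neg hv₀)

/-- The spanning vectors: indicator that `i` extends the pair values. -/
def gvec (p : Pairs C d) : ((v : Fin n) → Fin (d v)) → ℚ :=
  fun i => if ∀ v : {v // v ∈ p.1.1}, (i v.1).1 = (p.2 v).1 + 1 then 1 else 0

/-- Support of a tuple `t` inside `F`. -/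
def pairGt {F : Finset (Fin n)} (t : (v : {v // v ∈ F}) → Fin (d v.1)) : Finset (Fin n) :=
  (F.attach.filter fun v => (t v).1 ≠ 0).image Subtype.val

lemma mem_pairGt {F : Finset (Fin n)} (t : (v : {v // v ∈ F}) → Fin (d v.1)) {v : Fin n} :
    v ∈ pairGt t ↔ ∃ h : v ∈ F, (t ⟨v, h⟩).1 ≠ 0 := by
  constructor
  · intro hv
    rw [pairGt, Finset.mem_image] at hv
    obtain ⟨a, ha, rfl⟩ := hv
    rw [Finset.mem_filter] at ha
    exact ⟨a.2, ha.2⟩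
  · rintro ⟨h, ht⟩
    rw [pairGt, Finset.mem_image]
    exact ⟨⟨v, h⟩, Finset.mem_filter.mpr ⟨Finset.mem_attach _ _, ht⟩, rfl⟩

lemma pairGt_subset {F : Finset (Fin n)} (t : (v : {v // v ∈ F}) → Fin (d v.1)) :
    pairGt t ⊆ F := fun v hv => ((mem_pairGt t).mp hv).choose

/-- The pair associated to a tuple `t` on a face `F`. -/
noncomputable def pairOfT {F : Finset (Fin n)} (hF : F ∈ C.faces)
    (t : (v : {v // v ∈ F}) → Fin (d v.1)) : Pairs C d :=
  ⟨⟨pairGt t, C.down_closed F hF _ (pairGt_subset t)⟩,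
   fun v => ⟨(t ⟨v.1, ((mem_pairGt t).mp v.2).choose⟩).1 - 1, by
     have h1 : (t ⟨v.1, ((mem_pairGt t).mp v.2).choose⟩).1 ≠ 0 :=
       ((mem_pairGt t).mp v.2).choose_spec
     have h2 : (t ⟨v.1, ((mem_pairGt t).mp v.2).choose⟩).1 < d v.1 :=
       (t ⟨v.1, ((mem_pairGt t).mp v.2).choose⟩).2
     omega⟩⟩

lemma gvec_pairOfT {F : Finset (Fin n)} (hF : F ∈ C.faces)
    (t : (v : {v // v ∈ F}) → Fin (d v.1)) (i : (v : Fin n) → Fin (d v)) :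
    gvec C (pairOfT C hF t) i
      = ∏ v : {v // v ∈ F},
          (if (t v).1 = 0 then (1:ℚ) else if (i v.1).1 = (t v).1 then 1 else 0) := by
  have hfac : ∀ v : {v // v ∈ F},
      (if (t v).1 = 0 then (1:ℚ) else if (i v.1).1 = (t v).1 then 1 else 0)
        = if ((t v).1 ≠ 0 → (i v.1).1 = (t v).1) then 1 else 0 := by
    intro v
    by_cases h0 : (t v).1 = 0
    · rw [if_pos h0, if_pos (fun hc => absurd h0 hc)]
    · rw [if_neg h0]
      by_cases hiv : (i v.1).1 = (t v).1
      · rw [if_pos hiv, if_pos fun _ => hiv]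
      · rw [if_neg hiv, if_neg (fun himp => hiv (himp h0))]
  rw [Finset.prod_congr rfl (fun v _ => hfac v), prod_boole']
  unfold gvec
  refine if_congr ?_ rfl rfl
  constructor
  · intro hall v hv0
    have hmem : v.1 ∈ pairGt t := (mem_pairGt t).mpr ⟨v.2, hv0⟩
    have hch : (t ⟨v.1, ((mem_pairGt t).mp hmem).choose⟩).1 ≠ 0 :=
      ((mem_pairGt t).mp hmem).choose_spec
    have h1 : (i v.1).1 = (t ⟨v.1, ((mem_pairGt t).mp hmem).choose⟩).1 - 1 + 1 :=
      hall ⟨v.1, hmem⟩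
    have h2 : (t ⟨v.1, ((mem_pairGt t).mp hmem).choose⟩).1 = (t v).1 := rfl
    omega
  · intro hall w
    have hch : (t ⟨w.1, ((mem_pairGt t).mp w.2).choose⟩).1 ≠ 0 :=
      ((mem_pairGt t).mp w.2).choose_spec
    have h1 : (i w.1).1 = (t ⟨w.1, ((mem_pairGt t).mp w.2).choose⟩).1 :=
      hall ⟨w.1, ((mem_pairGt t).mp w.2).choose⟩ hch
    show (i w.1).1 = (t ⟨w.1, ((mem_pairGt t).mp w.2).choose⟩).1 - 1 + 1
    omega

lemma intRank_le_card_pairs :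
    intRank (C.designMatrixD d) ≤ Fintype.card (Pairs C d) := by
  classical
  set M := (C.designMatrixD d).map ((↑·) : ℤ → ℚ) with hM
  have hrk : intRank (C.designMatrixD d) = M.rank := rfl
  rw [hrk, Matrix.rank_eq_finrank_span_row, Matrix.row]
  have hsub : Set.range M ⊆ ↑(span ℚ (Set.range (gvec C (d := d)))) := by
    rintro x ⟨row, rfl⟩
    obtain ⟨⟨F, hF⟩, j⟩ := row
    have hFface : F ∈ C.faces := ((mem_facets_dmaux C).mp hF).1
    have key : M ⟨⟨F, hF⟩, j⟩ = ∑ t : ((v : {v // v ∈ F}) → Fin (d v.1)),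
        (∏ v, coefC (j v) (t v)) • gvec C (pairOfT C hFface t) := by
      funext i
      rw [Finset.sum_apply]
      have hstep : ∀ t : ((v : {v // v ∈ F}) → Fin (d v.1)),
          ((∏ v, coefC (j v) (t v)) • gvec C (pairOfT C hFface t)) i
            = ∏ v : {v // v ∈ F}, (coefC (j v) (t v) *
                (if (t v).1 = 0 then (1:ℚ) else if (i v.1).1 = (t v).1 then 1 else 0)) := by
        intro t
        rw [Pi.smul_apply, smul_eq_mul, gvec_pairOfT C hFface t i, ← Finset.prod_mul_distrib]
      rw [Finset.sum_congr rfl (fun t _ => hstep t)]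
      have hps := Fintype.prod_sum (ι := {v // v ∈ F}) (κ := fun v => Fin (d v.1))
        (f := fun v s => coefC (j v) s *
          (if s.1 = 0 then (1:ℚ) else if (i v.1).1 = s.1 then 1 else 0))
      rw [← hps]
      have hv : ∀ v : {v // v ∈ F},
          (∑ s : Fin (d v.1), coefC (j v) s *
            (if s.1 = 0 then (1:ℚ) else if (i v.1).1 = s.1 then 1 else 0))
            = if (i v.1).1 = (j v).1 then 1 else 0 :=
        fun v => coef_sum (j v) (i v.1).1 (i v.1).2
      rw [Finset.prod_congr rfl (fun v _ => hv v), prod_boole']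
      show (((if ∀ v : {v // v ∈ F}, i v.1 = j v then 1 else 0 : ℤ)) : ℚ) = _
      rw [apply_ite (fun z : ℤ => (z : ℚ))]
      rw [if_congr (forall_congr' fun v => Fin.ext_iff) rfl rfl]
      norm_num
    rw [key]
    exact sum_mem fun t _ => smul_mem _ _ (subset_span ⟨pairOfT C hFface t, rfl⟩)
  have h1 : finrank ℚ (span ℚ (Set.range M))
      ≤ finrank ℚ (span ℚ (Set.range (gvec C (d := d)))) :=
    Submodule.finrank_mono (span_le.mpr hsub)
  have h2 : finrank ℚ (span ℚ (Set.range (gvec C (d := d)))) ≤ Fintype.card (Pairs C d) :=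
    finrank_range_le_card _
  omega

end L1
section Assemble

open SComplex Finset Matrix

attribute [local instance] Classical.propDecidable

variable {n : ℕ} (C : SComplex (Fin n)) {d d' : Fin n → ℕ}

lemma castdet {ι : Type} [Fintype ι] [DecidableEq ι] (N : Matrix ι ι ℤ) :
    (N.map ((↑·) : ℤ → ℚ)).det = ((N.det : ℤ) : ℚ) := by
  exact ((Int.castRingHom ℚ).map_det N).symm

variable (hd : ∀ v, 2 ≤ d' v ∧ d' v ≤ d v)

lemma det_ext (h2 : ∀ v, 2 ≤ d v) {s : ℕ}
    (r : Fin s → ((F : {F // F ∈ C.facets}) × ((v : {v // v ∈ F.1}) → Fin (d' v.1))))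
    (c : Fin s → ((v : Fin n) → Fin (d' v))) :
    ((C.designMatrixD d).submatrix
        (Sum.elim (fun i => grEmb C hd (r i))
          (rowOf C h2 ∘ (Subtype.val : {p : Pairs C d // p ∉ Set.range (gpEmb C hd)} → Pairs C d)))
        (Sum.elim (fun i => gcEmb hd (c i))
          (colOf C h2 ∘ (Subtype.val : {p : Pairs C d // p ∉ Set.range (gpEmb C hd)} → Pairs C d)))).det
      = ((C.designMatrixD d').submatrix r c).det := by
  classical
  have hblock : (C.designMatrixD d).submatrix
        (Sum.elim (fun i => grEmb C hd (r i))
          (rowOf C h2 ∘ (Subtype.val : {p : Pairs C d // p ∉ Set.range (gpEmb C hd)} → Pairs C d)))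
        (Sum.elim (fun i => gcEmb hd (c i))
          (colOf C h2 ∘ (Subtype.val : {p : Pairs C d // p ∉ Set.range (gpEmb C hd)} → Pairs C d)))
      = Matrix.fromBlocks
        ((C.designMatrixD d').submatrix r c)
        ((C.designMatrixD d).submatrix (fun i => grEmb C hd (r i))
          (colOf C h2 ∘ Subtype.val))
        0
        ((C.designMatrixD d).submatrix (rowOf C h2 ∘ Subtype.val)
          (colOf C h2 ∘ Subtype.val)) := by
    ext x y
    match x, y with
    | Sum.inl a, Sum.inl b => exact entry_emb C hd (r a) (c b)
    | Sum.inl a, Sum.inr b => rfl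
    | Sum.inr a, Sum.inl b => exact entry_bad_good C hd h2 a.2 (c b)
    | Sum.inr a, Sum.inr b => rfl
  rw [hblock, Matrix.det_fromBlocks_zero₂₁,
    det_pairs C h2 (Subtype.val : {p : Pairs C d // p ∉ Set.range (gpEmb C hd)} → Pairs C d)
      Subtype.val_injective, mul_one]

end Assemble

theorem designMatrixD_unimodular_of_le' {n : ℕ} (C : SComplex (Fin n)) (d d' : Fin n → ℕ)
    (hd : ∀ v, 2 ≤ d' v ∧ d' v ≤ d v)
    (hU : IntUnimodular (C.designMatrixD d)) :
    IntUnimodular (C.designMatrixD d') := by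
  classical
  have h2d : ∀ v, 2 ≤ d v := fun v => le_trans (hd v).1 (hd v).2
  have h2d' : ∀ v, 2 ≤ d' v := fun v => (hd v).1
  set A := C.designMatrixD d with hA
  set A' := C.designMatrixD d' with hA'
  -- lower bound for the rank of A'
  have hA'low : Fintype.card (Pairs C d') ≤ intRank A' := by
    have hdet1 : ((A'.submatrix (rowOf C h2d' ∘ id) (colOf C h2d' ∘ id)).det : ℤ) = 1 :=
      det_pairs C h2d' id Function.injective_id
    have hdetQ : (((A'.map ((↑·) : ℤ → ℚ)).submatrix (rowOf C h2d') (colOf C h2d')).det : ℚ) ≠ 0 := by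
      have : ((A'.map ((↑·) : ℤ → ℚ)).submatrix (rowOf C h2d') (colOf C h2d')).det
          = (((A'.submatrix (rowOf C h2d') (colOf C h2d')).det : ℤ) : ℚ) :=
        castdet (A'.submatrix (rowOf C h2d') (colOf C h2d'))
      rw [this, show (A'.submatrix (rowOf C h2d') (colOf C h2d')) =
        (A'.submatrix (rowOf C h2d' ∘ id) (colOf C h2d' ∘ id)) from rfl, hdet1]
      norm_num
    exact card_le_rank_of_det_ne (A'.map ((↑·) : ℤ → ℚ)) _ _ hdetQ
  -- lower bound for the rank of A
  have hAlow : intRank A' + Fintype.card {p : Pairs C d // p ∉ Set.range (gpEmb C hd)}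
      ≤ intRank A := by
    obtain ⟨r₀, c₀, hdet₀⟩ := exists_submatrix_det_ne (A'.map ((↑·) : ℤ → ℚ))
    set R := Sum.elim (fun i => grEmb C hd (r₀ i))
      (rowOf C h2d ∘ (Subtype.val : {p : Pairs C d // p ∉ Set.range (gpEmb C hd)} → Pairs C d))
    set Cc := Sum.elim (fun i => gcEmb hd (c₀ i))
      (colOf C h2d ∘ (Subtype.val : {p : Pairs C d // p ∉ Set.range (gpEmb C hd)} → Pairs C d))
    have hdetQ : (((A.map ((↑·) : ℤ → ℚ)).submatrix R Cc).det : ℚ) ≠ 0 := by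
      have e1 : ((A.map ((↑·) : ℤ → ℚ)).submatrix R Cc).det
          = (((A.submatrix R Cc).det : ℤ) : ℚ) := castdet (A.submatrix R Cc)
      have e2 : (A.submatrix R Cc).det = (A'.submatrix r₀ c₀).det := det_ext C hd h2d r₀ c₀
      have e3 : (((A'.submatrix r₀ c₀).det : ℤ) : ℚ)
          = ((A'.map ((↑·) : ℤ → ℚ)).submatrix r₀ c₀).det :=
        (castdet (A'.submatrix r₀ c₀)).symm
      rw [e1, e2, e3]
      exact hdet₀
    have hcard := card_le_rank_of_det_ne (A.map ((↑·) : ℤ → ℚ)) R Cc hdetQ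
    rwa [Fintype.card_sum, Fintype.card_fin] at hcard
  have hAup : intRank A ≤ Fintype.card (Pairs C d) := intRank_le_card_pairs C
  have hsplit := card_pairs_split C hd
  have hrankeq : intRank A = intRank A' +
      Fintype.card {p : Pairs C d // p ∉ Set.range (gpEmb C hd)} := by omega
  -- the unimodularity transfer
  obtain ⟨lam, hlam, hmin⟩ := hU
  refine ⟨lam, hlam, fun r c => ?_⟩
  let e : Fin (intRank A) ≃
      (Fin (intRank A') ⊕ {p : Pairs C d // p ∉ Set.range (gpEmb C hd)}) :=
    (finCongr hrankeq).trans ((finSumFinEquiv.symm).trans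
      (Equiv.sumCongr (Equiv.refl _) (Fintype.equivFinOfCardEq rfl).symm))
  set R := Sum.elim (fun i => grEmb C hd (r i))
    (rowOf C h2d ∘ (Subtype.val : {p : Pairs C d // p ∉ Set.range (gpEmb C hd)} → Pairs C d))
  set Cc := Sum.elim (fun i => gcEmb hd (c i))
    (colOf C h2d ∘ (Subtype.val : {p : Pairs C d // p ∉ Set.range (gpEmb C hd)} → Pairs C d))
  have hdeq : (A.submatrix (R ∘ e) (Cc ∘ e)).det = (A'.submatrix r c).det := by
    rw [← Matrix.submatrix_submatrix, Matrix.det_submatrix_equiv_self e,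
      det_ext C hd h2d r c]
  have := hmin (R ∘ e) (Cc ∘ e)
  rwa [hdeq] at this

/-- If `A_{C,d}` is unimodular and `2 ≤ d' ≤ d` componentwise, then `A_{C,d'}` is
unimodular. -/
theorem designMatrixD_unimodular_of_le {n : ℕ} (C : SComplex (Fin n)) (d d' : Fin n → ℕ)
    (hd : ∀ v, 2 ≤ d' v ∧ d' v ≤ d v)
    (hU : IntUnimodular (C.designMatrixD d)) :
    IntUnimodular (C.designMatrixD d') :=
  designMatrixD_unimodular_of_le' C d d' hd hU
end
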